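/- Let G and G' be formula graphs. If G can be embedded into G' and G' can be embedded into G, then G and G' are isomorphic. -/

import Mathlib

/-- A finite signature: finitely many sorts, first-order predicate symbols with
sorted finite arities, second-order relation symbols with finite arities, finitely
many constants per sort, countably infinitely many variables per sort, and no
function symbols. -/
structure Signature where
  Srt : Type
  Pred : Type
  Rel : Type
  sortFinite : Finite Srt
  predFinite : Finite Pred
  relFinite : Finite Rel
  parity : Pred → ℕ
  psort : (p : Pred) → Fin (parity p) → Srt
  rarity : Rel → ℕ
  Const : Srt → Type
  constFinite : ∀ σ, Finite (Const σ)
  Var : Srt → Type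
  varCountable : ∀ σ, Countable (Var σ)
  varInfinite : ∀ σ, Infinite (Var σ)

namespace Signature

/-- First-order terms of sort `σ`: constants and variables. -/
def Term (S : Signature) (σ : S.Srt) : Type := S.Const σ ⊕ S.Var σ

/-- A first-order literal: a predicate symbol, a polarity, and sorted arguments. -/
structure Literal (S : Signature) where
  pred : S.Pred
  pol : Bool
  args : (i : Fin (S.parity pred)) → S.Term (S.psort pred i)

/-- A formula graph: a finite set `V` of literals together with, for each
second-order relation symbol `R`, a set of tuples from `V` of length the arity
of `R`. -/
structure FormulaGraph (S : Signature) where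
  V : Set (Literal S)
  Vfin : V.Finite
  E : (R : S.Rel) → Set (Fin (S.rarity R) → Literal S)
  E_mem : ∀ R t, t ∈ E R → ∀ i, t i ∈ V

/-- The order of a formula graph: the number of its vertices. -/
noncomputable def FormulaGraph.order {S : Signature} (G : FormulaGraph S) : ℕ := G.V.ncard

/-- Applying a sort-indexed substitution to a literal. -/
def Literal.map {S : Signature} (α : ∀ σ, S.Term σ → S.Term σ) (l : Literal S) :
    Literal S :=
  ⟨l.pred, l.pol, fun i => α _ (l.args i)⟩

/-- A homomorphism of formula graphs: a vertex map together with sort-indexed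
substitutions fixing constants, compatible with the literal structure, and
preserving edges. -/
structure Hom {S : Signature} (G G' : FormulaGraph S) where
  h : Literal S → Literal S
  α : ∀ σ, S.Term σ → S.Term σ
  fixesConst : ∀ σ (c : S.Const σ), α σ (Sum.inl c) = Sum.inl c
  mapsV : ∀ l ∈ G.V, h l ∈ G'.V
  compat : ∀ l ∈ G.V, h l = Literal.map α l
  mapsE : ∀ R t, t ∈ G.E R → (fun i => h (t i)) ∈ G'.E R

/-- The identity homomorphism. -/
def Hom.id {S : Signature} (G : FormulaGraph S) : Hom G G where
  h := fun l => l
  α := fun _ t => t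
  fixesConst := fun _ _ => rfl
  mapsV := fun _ hl => hl
  compat := fun _ _ => rfl
  mapsE := fun _ _ ht => ht

/-- Composition of homomorphisms, componentwise. -/
def Hom.comp {S : Signature} {G G' G'' : FormulaGraph S}
    (f : Hom G G') (g : Hom G' G'') : Hom G G'' where
  h := fun l => g.h (f.h l)
  α := fun σ t => g.α σ (f.α σ t)
  fixesConst := by
    intro σ c
    exact (congrArg (g.α σ) (f.fixesConst σ c)).trans (g.fixesConst σ c)
  mapsV := fun l hl => g.mapsV _ (f.mapsV l hl)
  compat := by
    intro l hl
    exact (g.compat _ (f.mapsV l hl)).trans (by rw [f.compat l hl]; rfl)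
  mapsE := fun R t ht => g.mapsE R _ (f.mapsE R t ht)

/-- An embedding: a homomorphism injective on vertices with injective
substitutions. -/
def IsEmbedding {S : Signature} {G G' : FormulaGraph S} (f : Hom G G') : Prop :=
  Set.InjOn f.h G.V ∧ ∀ σ, Function.Injective (f.α σ)

/-- An isomorphism: a homomorphism with bijective components whose componentwise
inverses also form a homomorphism. -/
def IsIso {S : Signature} {G G' : FormulaGraph S} (f : Hom G G') : Prop :=
  Set.BijOn f.h G.V G'.V ∧ (∀ σ, Function.Bijective (f.α σ)) ∧
  ∃ g : Hom G' G,
    (∀ l ∈ G.V, g.h (f.h l) = l) ∧ (∀ l ∈ G'.V, f.h (g.h l) = l) ∧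
    (∀ σ t, g.α σ (f.α σ t) = t) ∧ (∀ σ t, f.α σ (g.α σ t) = t)

/-- Two formula graphs are isomorphic if there is an isomorphism between them. -/
def Iso {S : Signature} (G G' : FormulaGraph S) : Prop := ∃ f : Hom G G', IsIso f

/-- `G` can be embedded into `G'`. -/
def CanEmbed {S : Signature} (G G' : FormulaGraph S) : Prop :=
  ∃ f : Hom G G', IsEmbedding f

end Signature

section AuxiliaryLemmas

open Signature

/-- Pigeonhole: mutually injective maps between finite sets give image equality. -/
lemma aux_image_eq {α β : Type*} {s : Set α} {t : Set β} (hs : s.Finite) (ht : t.Finite)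
    {f : α → β} {g : β → α} (hf : Set.MapsTo f s t) (hfi : Set.InjOn f s)
    (hg : Set.MapsTo g t s) (hgi : Set.InjOn g t) : f '' s = t := by
  have h3 : t.ncard ≤ s.ncard := by
    calc t.ncard = (g '' t).ncard := (Set.ncard_image_of_injOn hgi).symm
      _ ≤ s.ncard := Set.ncard_le_ncard hg.image_subset hs
  refine Set.eq_of_subset_of_ncard_le hf.image_subset ?_ ht
  rw [Set.ncard_image_of_injOn hfi]; exact h3

/-- Any injection of a countably infinite type into itself agrees with some
permutation on any prescribed finite set. -/
lemma aux_perm_extend {X : Type*} [Countable X] [Infinite X] {φ : X → X}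
    (hφ : Function.Injective φ) {A : Set X} (hA : A.Finite) :
    ∃ e : Equiv.Perm X, ∀ a ∈ A, e a = φ a := by
  classical
  have hB : (φ '' A).Finite := hA.image φ
  let e1 : ↥A ≃ ↥(φ '' A) :=
    Equiv.ofBijective (fun a => ⟨φ a, Set.mem_image_of_mem φ a.2⟩)
      ⟨fun a b hab => Subtype.ext (hφ (congrArg Subtype.val hab)),
       by rintro ⟨y, x, hx, rfl⟩; exact ⟨⟨x, hx⟩, rfl⟩⟩
  haveI : Infinite ↥(Aᶜ : Set X) := hA.infinite_compl.to_subtype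
  haveI : Infinite ↥((φ '' A)ᶜ : Set X) := hB.infinite_compl.to_subtype
  obtain ⟨e2⟩ : Nonempty (↥(Aᶜ : Set X) ≃ ↥((φ '' A)ᶜ : Set X)) := nonempty_equiv_of_countable
  refine ⟨(Equiv.Set.sumCompl A).symm.trans ((e1.sumCongr e2).trans
    (Equiv.Set.sumCompl (φ '' A))), ?_⟩
  intro a ha
  have h1 : (Equiv.Set.sumCompl A).symm a = Sum.inl (⟨a, ha⟩ : ↥A) :=
    Equiv.Set.sumCompl_symm_apply (s := A) (x := ⟨a, ha⟩)
  simp [Equiv.trans_apply, h1, e1]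
  rfl

/-- The set of terms of a given sort occurring in a formula graph is finite. -/
lemma aux_args_finite (S : Signature) (G : FormulaGraph S) (σ : S.Srt) :
    {t : S.Term σ | ∃ l ∈ G.V, ∃ i : Fin (S.parity l.pred),
      ∃ h : S.psort l.pred i = σ, h ▸ l.args i = t}.Finite := by
  have heq : {t : S.Term σ | ∃ l ∈ G.V, ∃ i : Fin (S.parity l.pred),
      ∃ h : S.psort l.pred i = σ, h ▸ l.args i = t}
      = ⋃ l ∈ G.V, ⋃ i : Fin (S.parity l.pred),
          Set.range (fun h : S.psort l.pred i = σ => h ▸ l.args i) := by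
    ext t
    simp only [Set.mem_setOf_eq, Set.mem_iUnion, Set.mem_range, exists_prop]
  rw [heq]
  refine Set.Finite.biUnion G.Vfin fun l _ => Set.finite_iUnion fun i => ?_
  haveI : Finite (S.psort l.pred i = σ) := Finite.of_subsingleton
  exact Set.finite_range _

end AuxiliaryLemmas

open Signature in
/-- mutually embeddable formula graphs are isomorphic. -/
theorem stmt8 (S : Signature) (G G' : FormulaGraph S)
    (h1 : CanEmbed G G') (h2 : CanEmbed G' G) : Iso G G' := by
  classical
  obtain ⟨f, hfi, hfα⟩ := h1
  obtain ⟨g, hgi, hgα⟩ := h2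
  -- The vertex map of `f` is a bijection from `G.V` onto `G'.V`.
  have hVim : f.h '' G.V = G'.V :=
    aux_image_eq G.Vfin G'.Vfin f.mapsV hfi g.mapsV hgi
  -- Edge sets are finite.
  have hEfin : ∀ (H : FormulaGraph S) (R : S.Rel), (H.E R).Finite := by
    intro H R
    refine Set.Finite.subset (Set.Finite.pi (fun _ : Fin (S.rarity R) => H.Vfin)) ?_
    intro t ht i _
    exact H.E_mem R t ht i
  have hEinj : ∀ {A B : FormulaGraph S} (φ : Hom A B), Set.InjOn φ.h A.V →
      ∀ R, Set.InjOn (fun t => (fun i => φ.h (t i))) (A.E R) := by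
    intro A B φ hinj R t1 ht1 t2 ht2 heq
    funext i
    exact hinj (A.E_mem R t1 ht1 i) (A.E_mem R t2 ht2 i) (congrFun heq i)
  have hEim : ∀ R, (fun t => (fun i => f.h (t i))) '' G.E R = G'.E R := by
    intro R
    exact aux_image_eq (hEfin G R) (hEfin G' R)
      (fun t ht => f.mapsE R t ht) (hEinj f hfi R)
      (fun t ht => g.mapsE R t ht) (hEinj g hgi R)
  -- Extend the substitutions of `f` to permutations of each term sort.
  have hβ : ∀ σ : S.Srt, ∃ e : Equiv.Perm (S.Term σ),
      ∀ a ∈ ({t : S.Term σ | ∃ l ∈ G.V, ∃ i : Fin (S.parity l.pred),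
          ∃ h : S.psort l.pred i = σ, h ▸ l.args i = t}
        ∪ Set.range (Sum.inl : S.Const σ → S.Term σ)), e a = f.α σ a := by
    intro σ
    haveI := S.constFinite σ; haveI := S.varCountable σ; haveI := S.varInfinite σ
    haveI : Countable (S.Term σ) := by unfold Signature.Term; infer_instance
    haveI : Infinite (S.Term σ) := by unfold Signature.Term; infer_instance
    exact aux_perm_extend (hfα σ) ((aux_args_finite S G σ).union (Set.finite_range _))
  choose β hβspec using hβ
  have hβc : ∀ σ (c : S.Const σ), β σ (Sum.inl c) = Sum.inl c := by
    intro σ c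
    rw [hβspec σ _ (Or.inr ⟨c, rfl⟩)]
    exact f.fixesConst σ c
  have hβargs : ∀ l ∈ G.V, ∀ i : Fin (S.parity l.pred),
      β (S.psort l.pred i) (l.args i) = f.α _ (l.args i) := by
    intro l hl i
    exact hβspec _ _ (Or.inl ⟨l, hl, i, rfl, rfl⟩)
  have hmapβ : ∀ l ∈ G.V, Literal.map (fun σ => ⇑(β σ)) l = Literal.map f.α l := by
    intro l hl
    exact congrArg (Literal.mk l.pred l.pol) (funext fun i => hβargs l hl i)
  -- The inverse vertex map.
  let hinv : Literal S → Literal S := fun l =>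
    if hl : ∃ a ∈ G.V, f.h a = l then hl.choose else l
  have hinv_left : ∀ l ∈ G.V, hinv (f.h l) = l := by
    intro l hl
    have hex : ∃ a ∈ G.V, f.h a = f.h l := ⟨l, hl, rfl⟩
    simp only [hinv, dif_pos hex]
    exact hfi hex.choose_spec.1 hl hex.choose_spec.2
  have hmemim : ∀ l ∈ G'.V, ∃ a ∈ G.V, f.h a = l := by
    intro l hl
    rw [← hVim] at hl
    obtain ⟨a, ha, rfl⟩ := hl
    exact ⟨a, ha, rfl⟩
  have hinv_mem : ∀ l ∈ G'.V, hinv l ∈ G.V := by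
    intro l hl
    have hex := hmemim l hl
    simp only [hinv, dif_pos hex]
    exact hex.choose_spec.1
  have hinv_right : ∀ l ∈ G'.V, f.h (hinv l) = l := by
    intro l hl
    have hex := hmemim l hl
    simp only [hinv, dif_pos hex]
    exact hex.choose_spec.2
  -- Assemble the isomorphism.
  refine ⟨⟨f.h, fun σ => ⇑(β σ), hβc, f.mapsV,
      fun l hl => (f.compat l hl).trans (hmapβ l hl).symm, f.mapsE⟩,
    ⟨f.mapsV, hfi, hVim.symm.subset⟩, fun σ => (β σ).bijective,
    ⟨hinv, fun σ => ⇑(β σ).symm, ?_, hinv_mem, ?_, ?_⟩,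
    hinv_left, hinv_right,
    fun σ t => (β σ).symm_apply_apply t, fun σ t => (β σ).apply_symm_apply t⟩
  · -- fixesConst for the inverse
    intro σ c
    refine (Equiv.symm_apply_eq (β σ)).mpr ?_
    exact (hβc σ c).symm
  · -- compat for the inverse
    intro l hl
    obtain ⟨m, hm, rfl⟩ := hmemim l hl
    rw [hinv_left m hm, (f.compat m hm).trans (hmapβ m hm).symm]
    exact congrArg (Literal.mk m.pred m.pol)
      (funext fun i => ((β _).symm_apply_apply (m.args i)).symm)
  · -- mapsE for the inverse
    intro R t ht
    rw [← hEim R] at ht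
    obtain ⟨s, hs, rfl⟩ := ht
    have hfix : (fun i => hinv (f.h (s i))) = s :=
      funext fun i => hinv_left _ (G.E_mem R s hs i)
    show (fun i => hinv (f.h (s i))) ∈ G.E R
    rw [hfix]
    exact hs
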